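/- In the setting of the GNW estimator (x_i, ε_i, a_i i.i.d., a_i Bernoulli with mean k(x,x_i) given x_i, y_i = f(x_i)+ε_i, c(x) = E[a_1] > 0, S = S(f,x) = E[f(x_1)a_1]/c(x)), with Z = 1[∑ a_i > 0], one has E[(f̂(x) - S·Z)²] = ∑_{i=1}^n E[(y_i - S)² a_i R_i²], where R_i = 1/(1 + ∑_{j≠i} a_j). -/

import Mathlib

open MeasureTheory ProbabilityTheory

/-- The Graphical Nadaraya–Watson estimator: average of the labels
`y_i = f(x_i) + ε_i` over the neighbors (`a_i = 1`), or `0` if there are none. -/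
noncomputable def gnwEst {Ω : Type*} {d n : ℕ}
    (x : Fin n → Ω → EuclideanSpace ℝ (Fin d)) (ε a : Fin n → Ω → ℝ)
    (f : EuclideanSpace ℝ (Fin d) → ℝ) (ω : Ω) : ℝ :=
  if 0 < ∑ i, a i ω then (∑ i, (f (x i ω) + ε i ω) * a i ω) / (∑ i, a i ω) else 0

/- auxiliary: product of two L² functions is integrable -/
lemma gnw_l2_mul_integrable {Ω : Type*} [MeasurableSpace Ω] {μ : Measure Ω}
    {g h : Ω → ℝ} (hg : MemLp g 2 μ) (hh : MemLp h 2 μ) :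
    Integrable (fun ω => g ω * h ω) μ := by
  rw [← memLp_one_iff_integrable]
  have h1 : (1 : ENNReal) / 1 = 1 / 2 + 1 / 2 := by
    rw [ENNReal.div_add_div_same, one_div_one, one_add_one_eq_two,
      ENNReal.div_self two_ne_zero ENNReal.ofNat_ne_top]
  have h2 := hh.smul (φ := g) (r := 1) hg
  have h3 : (g • h) = fun ω => g ω * h ω := by
    funext ω
    simp [smul_eq_mul]
  rwa [h3] at h2

/- auxiliary: a bounded measurable function is integrable on a finite measure space -/
lemma gnw_bdd_integrable {Ω : Type*} [MeasurableSpace Ω] {μ : Measure Ω}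
    [IsFiniteMeasure μ] {g : Ω → ℝ} (hg : Measurable g) (C : ℝ)
    (hC : ∀ ω, |g ω| ≤ C) : Integrable g μ :=
  memLp_one_iff_integrable.mp
    (MemLp.of_bound hg.aestronglyMeasurable C (Filter.Eventually.of_forall hC))

/-- Decomposition of the GNW variance proxy: with `Z = 1[sum a_i > 0]` and
`R_i = 1/(1 + sum_{j ≠ i} a_j)`, one has
`E[(fhat(x) - S*Z)^2] = sum_i E[(y_i - S)^2 a_i R_i^2]`. -/
theorem gnw_variance_proxy_decomposition {Ω : Type*} [MeasurableSpace Ω]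
    (μ : Measure Ω) [IsProbabilityMeasure μ]
    {d n : ℕ} (hn : 0 < n)
    (x : Fin n → Ω → EuclideanSpace ℝ (Fin d)) (ε a : Fin n → Ω → ℝ)
    (hxm : ∀ i, Measurable (x i)) (hεm : ∀ i, Measurable (ε i))
    (ham : ∀ i, Measurable (a i))
    (hindep : ProbabilityTheory.iIndepFun
      (fun i ω => (x i ω, ε i ω, a i ω)) μ)
    (hid : ∀ i, ProbabilityTheory.IdentDistrib (fun ω => (x i ω, ε i ω, a i ω))
      (fun ω => (x ⟨0, hn⟩ ω, ε ⟨0, hn⟩ ω, a ⟨0, hn⟩ ω)) μ μ)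
    (hbin : ∀ i ω, a i ω = 0 ∨ a i ω = 1)
    (hnoise : ∀ i, ProbabilityTheory.IndepFun (fun ω => (x i ω, a i ω)) (ε i) μ)
    (hεint : ∀ i, Integrable (ε i) μ)
    (hεL2 : ∀ i, MemLp (ε i) 2 μ)
    (hεmean : ∀ i, ∫ ω, ε i ω ∂μ = 0)
    (k : EuclideanSpace ℝ (Fin d) → ℝ)
    (hcond : ∀ i, μ[a i|MeasurableSpace.comap (x i) inferInstance]
      =ᵐ[μ] fun ω => k (x i ω))
    (f : EuclideanSpace ℝ (Fin d) → ℝ) (hfm : Measurable f)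
    (B : ℝ) (hB : ∀ z, |f z| ≤ B)
    (c : ℝ) (hc : c = ∫ ω, a ⟨0, hn⟩ ω ∂μ) (hcpos : 0 < c)
    (S : ℝ) (hS : S = (∫ ω, f (x ⟨0, hn⟩ ω) * a ⟨0, hn⟩ ω ∂μ) / c) :
    ∫ ω, (gnwEst x ε a f ω - S * (if 0 < ∑ i, a i ω then (1 : ℝ) else 0)) ^ 2 ∂μ
      = ∑ i, ∫ ω, ((f (x i ω) + ε i ω) - S) ^ 2 * a i ω
          * ((1 + ∑ j ∈ Finset.univ.erase i, a j ω)⁻¹) ^ 2 ∂μ := by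
  classical
  set i0 : Fin n := ⟨0, hn⟩ with hi0
  -- notation
  set y : Fin n → Ω → ℝ := fun i ω => f (x i ω) + ε i ω with hy
  set T : Fin n → Ω → ℝ :=
    fun i ω => (y i ω - S) * a i ω * (1 + ∑ j ∈ Finset.univ.erase i, a j ω)⁻¹ with hT
  have ha0 : ∀ i ω, 0 ≤ a i ω := by
    intro i ω; rcases hbin i ω with h | h <;> rw [h] <;> norm_num
  have hsum_nonneg : ∀ (s : Finset (Fin n)) ω, 0 ≤ ∑ j ∈ s, a j ω :=
    fun s ω => Finset.sum_nonneg fun j _ => ha0 j ω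
  have hone_pos : ∀ i ω, (0:ℝ) < 1 + ∑ j ∈ Finset.univ.erase i, a j ω := by
    intro i ω; have := hsum_nonneg (Finset.univ.erase i) ω; linarith
  have hinv01 : ∀ i ω, (1 + ∑ j ∈ Finset.univ.erase i, a j ω)⁻¹ ∈ Set.Icc (0:ℝ) 1 := by
    intro i ω
    constructor
    · exact inv_nonneg.mpr (le_of_lt (hone_pos i ω))
    · rw [inv_le_one_iff₀]; right
      have := hsum_nonneg (Finset.univ.erase i) ω; linarith
  -- measurability of T
  have hym : ∀ i, Measurable (y i) := fun i => (hfm.comp (hxm i)).add (hεm i)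
  have hTm : ∀ i, Measurable (T i) := by
    intro i
    exact (((hym i).sub measurable_const).mul (ham i)).mul
      ((measurable_const.add (Finset.measurable_sum _ fun j _ => ham j)).inv)
  -- T i is in L²
  have hTmem : ∀ i, MemLp (T i) 2 μ := by
    intro i
    have hb : MemLp (fun ω => f (x i ω) - S) 2 μ :=
      MemLp.of_bound ((hfm.comp (hxm i)).sub measurable_const).aestronglyMeasurable
        (B + |S|) (Filter.Eventually.of_forall fun ω => by
          have := hB (x i ω)
          calc ‖f (x i ω) - S‖ ≤ |f (x i ω)| + |S| := by
                rw [Real.norm_eq_abs]; exact abs_sub _ _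
            _ ≤ B + |S| := by linarith)
    have hh : MemLp (fun ω => y i ω - S) 2 μ := by
      have := hb.add (hεL2 i)
      have heq : (fun ω => y i ω - S) = (fun ω => f (x i ω) - S) + ε i := by
        funext ω; simp [hy]; ring
      rw [heq]; exact this
    refine MemLp.of_le hh (hTm i).aestronglyMeasurable
      (Filter.Eventually.of_forall fun ω => ?_)
    simp only [hT, Real.norm_eq_abs, abs_mul]
    have h1 : |a i ω| ≤ 1 := by rcases hbin i ω with h | h <;> simp [h]
    have h2 : |(1 + ∑ j ∈ Finset.univ.erase i, a j ω)⁻¹| ≤ 1 := by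
      rw [abs_of_nonneg (hinv01 i ω).1]; exact (hinv01 i ω).2
    calc |y i ω - S| * |a i ω| * |(1 + ∑ j ∈ Finset.univ.erase i, a j ω)⁻¹|
        ≤ |y i ω - S| * 1 * 1 := by
          apply mul_le_mul (mul_le_mul le_rfl h1 (abs_nonneg _) (abs_nonneg _)) h2
            (abs_nonneg _)
          positivity
      _ = |y i ω - S| := by ring
  have hTTint : ∀ i j, Integrable (fun ω => T i ω * T j ω) μ :=
    fun i j => gnw_l2_mul_integrable (hTmem i) (hTmem j)
  -- Step A: pointwise identity
  have hpt : ∀ ω, gnwEst x ε a f ω - S * (if 0 < ∑ i, a i ω then (1:ℝ) else 0)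
      = ∑ i, T i ω := by
    intro ω
    by_cases hpos : 0 < ∑ i, a i ω
    · rw [gnwEst, if_pos hpos, if_pos hpos]
      have hs_ne : (∑ i, a i ω) ≠ 0 := ne_of_gt hpos
      have hterm : ∀ i, T i ω = (y i ω - S) * a i ω / (∑ j, a j ω) := by
        intro i
        rcases hbin i ω with h | h
        · simp [hT, h]
        · have hsum : (∑ j ∈ Finset.univ.erase i, a j ω) + a i ω = ∑ j, a j ω :=
            Finset.sum_erase_add _ _ (Finset.mem_univ i)
          have : 1 + ∑ j ∈ Finset.univ.erase i, a j ω = ∑ j, a j ω := by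
            rw [← hsum, h]; ring
          rw [hT]; simp only []
          rw [this, div_eq_mul_inv]
      rw [Finset.sum_congr rfl fun i _ => hterm i, ← Finset.sum_div]
      have : ∑ i, (y i ω - S) * a i ω
          = (∑ i, y i ω * a i ω) - S * ∑ i, a i ω := by
        rw [Finset.mul_sum, ← Finset.sum_sub_distrib]
        exact Finset.sum_congr rfl fun i _ => by ring
      rw [this, sub_div, mul_div_assoc, div_self hs_ne]
    · have hz : ∀ i, a i ω = 0 := by
        have hsum0 : ∑ i, a i ω = 0 :=
          le_antisymm (not_lt.mp hpos) (hsum_nonneg Finset.univ ω)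
        intro i
        exact (Finset.sum_eq_zero_iff_of_nonneg fun j _ => ha0 j ω).mp hsum0 i
          (Finset.mem_univ i)
      rw [gnwEst, if_neg hpos, if_neg hpos]
      simp [hT, hz]
  -- E[(y_i - S) a_i] = 0
  have hg0 : ∀ i, ∫ ω, (y i ω - S) * a i ω ∂μ = 0 := by
    intro i
    have hI1 : Integrable (fun ω => f (x i ω) * a i ω) μ :=
      gnw_bdd_integrable ((hfm.comp (hxm i)).mul (ham i)) (B * 1) (fun ω => by
        rw [abs_mul]
        apply mul_le_mul (hB _) (by rcases hbin i ω with h | h <;> simp [h])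
          (abs_nonneg _) ((abs_nonneg (f (x i ω))).trans (hB _)))
    have hI3 : Integrable (a i) μ :=
      gnw_bdd_integrable (ham i) 1 (fun ω => by rcases hbin i ω with h | h <;> simp [h])
    have hI2 : Integrable (fun ω => ε i ω * a i ω) μ := by
      refine (hεint i).mono ((hεm i).mul (ham i)).aestronglyMeasurable
        (Filter.Eventually.of_forall fun ω => ?_)
      simp only [Real.norm_eq_abs, abs_mul]
      nlinarith [abs_nonneg (ε i ω), abs_nonneg (a i ω),
        (by rcases hbin i ω with h | h <;> simp [h] : |a i ω| ≤ 1)]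
    -- identities of integrals via identical distribution
    have hxa : ∫ ω, f (x i ω) * a i ω ∂μ = S * c := by
      have hcomp : IdentDistrib (fun ω => f (x i ω) * a i ω)
          (fun ω => f (x i0 ω) * a i0 ω) μ μ := by
        have hm : Measurable fun p : EuclideanSpace ℝ (Fin d) × ℝ × ℝ => f p.1 * p.2.2 :=
          (hfm.comp measurable_fst).mul (measurable_snd.comp measurable_snd)
        exact (hid i).comp hm
      rw [hcomp.integral_eq, hS, div_mul_cancel₀ _ (ne_of_gt hcpos)]
    have hai : ∫ ω, a i ω ∂μ = c := by
      have hcomp : IdentDistrib (a i) (a i0) μ μ := by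
        have hm : Measurable fun p : EuclideanSpace ℝ (Fin d) × ℝ × ℝ => p.2.2 :=
          measurable_snd.comp measurable_snd
        exact (hid i).comp hm
      rw [hcomp.integral_eq, hc]
    have hεa : ∫ ω, ε i ω * a i ω ∂μ = 0 := by
      have hind : IndepFun (ε i) (a i) μ :=
        (hnoise i).symm.comp measurable_id measurable_snd
      have := IndepFun.integral_mul_eq_mul_integral hind (hεint i).aestronglyMeasurable hI3.aestronglyMeasurable
      simpa [Pi.mul_apply, hεmean i] using this
    have heq : (fun ω => (y i ω - S) * a i ω)
        = fun ω => f (x i ω) * a i ω + ε i ω * a i ω - S * a i ω := by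
      funext ω; simp only [hy]; ring
    have hI12 : Integrable (fun ω => f (x i ω) * a i ω + ε i ω * a i ω) μ := hI1.add hI2
    have hI3' : Integrable (fun ω => S * a i ω) μ := hI3.const_mul S
    rw [heq, integral_sub hI12 hI3', integral_add hI1 hI2, integral_const_mul S (a i),
      hxa, hai, hεa]
    ring
  -- cross terms vanish
  have hcross : ∀ i j : Fin n, j ≠ i → ∫ ω, T i ω * T j ω ∂μ = 0 := by
    intro i j hij
    set s2 : Finset (Fin n) := (Finset.univ.erase i).erase j with hs2
    set W : Ω → ℝ := fun ω => ((2 + ∑ l ∈ s2, a l ω)⁻¹) ^ 2 with hW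
    set g : Fin n → Ω → ℝ := fun l ω => (y l ω - S) * a l ω with hgdef
    have hjmem : j ∈ Finset.univ.erase i := Finset.mem_erase.mpr ⟨hij, Finset.mem_univ j⟩
    -- pointwise factorization
    have hfac : ∀ ω, T i ω * T j ω = g i ω * (g j ω * W ω) := by
      intro ω
      rcases hbin i ω with h1 | h1
      · simp [hT, hgdef, h1]
      rcases hbin j ω with h2 | h2
      · simp [hT, hgdef, h2]
      have e1 : (1 + ∑ l ∈ Finset.univ.erase i, a l ω) = 2 + ∑ l ∈ s2, a l ω := by
        rw [← Finset.add_sum_erase _ _ hjmem, h2, ← hs2]; ring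
      have e2 : (1 + ∑ l ∈ Finset.univ.erase j, a l ω) = 2 + ∑ l ∈ s2, a l ω := by
        have himem : i ∈ Finset.univ.erase j :=
          Finset.mem_erase.mpr ⟨fun h => hij h.symm, Finset.mem_univ i⟩
        rw [← Finset.add_sum_erase _ _ himem, h1, Finset.erase_right_comm, ← hs2]; ring
      simp only [hT, hgdef, hW, e1, e2]
      ring
    -- independence
    have hXm : ∀ l : Fin n, Measurable fun ω => (x l ω, ε l ω, a l ω) :=
      fun l => (hxm l).prodMk ((hεm l).prodMk (ham l))
    have hdisj : Disjoint ({i} : Finset (Fin n)) (Finset.univ.erase i) := by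
      simp [Finset.disjoint_left]
    have hbase := hindep.indepFun_finset {i} (Finset.univ.erase i) hdisj hXm
    set jsub : {l // l ∈ Finset.univ.erase i} := ⟨j, hjmem⟩ with hjsub
    set isub : {l // l ∈ ({i} : Finset (Fin n))} := ⟨i, Finset.mem_singleton_self i⟩
    set φL : ({l // l ∈ ({i} : Finset (Fin n))} → EuclideanSpace ℝ (Fin d) × ℝ × ℝ) → ℝ :=
      fun v => (f (v isub).1 + (v isub).2.1 - S) * (v isub).2.2 with hφL
    set φR : ({l // l ∈ Finset.univ.erase i} → EuclideanSpace ℝ (Fin d) × ℝ × ℝ) → ℝ :=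
      fun v => ((f (v jsub).1 + (v jsub).2.1 - S) * (v jsub).2.2)
        * ((2 + ∑ l : {l // l ∈ Finset.univ.erase i},
            (if (l : Fin n) = j then 0 else (v l).2.2))⁻¹) ^ 2 with hφR
    have hmL : Measurable φL :=
      (((hfm.comp ((measurable_pi_apply isub).fst)).add
        ((measurable_pi_apply isub).snd.fst)).sub measurable_const).mul
        ((measurable_pi_apply isub).snd.snd)
    have hmR : Measurable φR := by
      apply Measurable.mul
      · exact (((hfm.comp ((measurable_pi_apply jsub).fst)).add
          ((measurable_pi_apply jsub).snd.fst)).sub measurable_const).mul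
          ((measurable_pi_apply jsub).snd.snd)
      · apply Measurable.pow_const
        apply Measurable.inv
        apply Measurable.add measurable_const
        apply Finset.measurable_sum
        intro l _
        split_ifs with h
        · exact measurable_const
        · exact (measurable_pi_apply l).snd.snd
    have hindep2 := hbase.comp hmL hmR
    have hLeq : (φL ∘ fun ω (l : {l // l ∈ ({i} : Finset (Fin n))}) =>
        (x (l : Fin n) ω, ε (l : Fin n) ω, a (l : Fin n) ω)) = g i := by
      funext ω; simp [hφL, hgdef, hy]; rfl
    have hReq : (φR ∘ fun ω (l : {l // l ∈ Finset.univ.erase i}) =>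
        (x (l : Fin n) ω, ε (l : Fin n) ω, a (l : Fin n) ω))
        = fun ω => g j ω * W ω := by
      funext ω
      have hsum : (∑ l : {l // l ∈ Finset.univ.erase i},
          (if (l : Fin n) = j then 0 else a (l : Fin n) ω)) = ∑ l ∈ s2, a l ω := by
        rw [Finset.sum_coe_sort _ (fun l => if l = j then 0 else a l ω),
          ← Finset.add_sum_erase _ (fun l => if l = j then 0 else a l ω) hjmem,
          if_pos rfl, zero_add]
        exact Finset.sum_congr rfl fun l hl => if_neg (Finset.ne_of_mem_erase hl)
      simp only [Function.comp_apply, hφR, hgdef, hW, hy, hsum]; rfl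
    rw [hLeq, hReq] at hindep2
    have hWm : Measurable (fun ω => g j ω * W ω) :=
      (((hym j).sub measurable_const).mul (ham j)).mul
        (((measurable_const.add (Finset.measurable_sum _ fun l _ => ham l)).inv).pow_const 2)
    have hgm : Measurable (g i) := ((hym i).sub measurable_const).mul (ham i)
    have hmul := IndepFun.integral_mul_eq_mul_integral hindep2 hgm.aestronglyMeasurable hWm.aestronglyMeasurable
    have hfin : ∫ ω, T i ω * T j ω ∂μ = ∫ ω, g i ω * (g j ω * W ω) ∂μ := by
      exact integral_congr_ae (Filter.Eventually.of_forall hfac)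
    rw [hfin]
    have : (∫ ω, g i ω * (g j ω * W ω) ∂μ)
        = (∫ ω, g i ω ∂μ) * ∫ ω, g j ω * W ω ∂μ := hmul
    rw [this]
    have : ∫ ω, g i ω ∂μ = 0 := hg0 i
    rw [this, zero_mul]
  -- diagonal term
  have hdiag : ∀ i : Fin n, ∫ ω, T i ω * T i ω ∂μ
      = ∫ ω, ((f (x i ω) + ε i ω) - S) ^ 2 * a i ω
          * ((1 + ∑ j ∈ Finset.univ.erase i, a j ω)⁻¹) ^ 2 ∂μ := by
    intro i
    apply integral_congr_ae
    apply Filter.Eventually.of_forall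
    intro ω
    rcases hbin i ω with h | h <;> simp only [hT, hy, h] <;> ring
  -- main computation
  calc ∫ ω, (gnwEst x ε a f ω - S * (if 0 < ∑ i, a i ω then (1:ℝ) else 0)) ^ 2 ∂μ
      = ∫ ω, ∑ i, ∑ j, T i ω * T j ω ∂μ := by
        apply integral_congr_ae
        apply Filter.Eventually.of_forall
        intro ω
        beta_reduce
        rw [hpt ω, sq, Finset.sum_mul_sum]
    _ = ∑ i, ∑ j, ∫ ω, T i ω * T j ω ∂μ := by
        rw [integral_finset_sum _ fun i _ => integrable_finset_sum _ fun j _ => hTTint i j]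
        exact Finset.sum_congr rfl fun i _ =>
          integral_finset_sum _ fun j _ => hTTint i j
    _ = ∑ i, ∫ ω, T i ω * T i ω ∂μ := by
        refine Finset.sum_congr rfl fun i _ => ?_
        exact Finset.sum_eq_single_of_mem i (Finset.mem_univ i)
          (fun j _ hj => hcross i j hj)
    _ = ∑ i, ∫ ω, ((f (x i ω) + ε i ω) - S) ^ 2 * a i ω
          * ((1 + ∑ j ∈ Finset.univ.erase i, a j ω)⁻¹) ^ 2 ∂μ :=
        Finset.sum_congr rfl fun i _ => hdiag i
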